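/- If τ has the positive 1/2-stable density f(t) = (2πt³)^{−1/2} e^{−1/(2t)} on (0,∞), then for a, u > 0, E[min(u, aτ)] = u + √(2au/π) e^{−a/(2u)} − 2(a+u)(1 − Φ(√(a/u))), where Φ is the standard normal CDF. -/

import Mathlib

open MeasureTheory ProbabilityTheory Real Set Filter

noncomputable def phi (x : ℝ) : ℝ := (Real.sqrt (2 * π))⁻¹ * Real.exp (-x ^ 2 / 2)

lemma phi_eq (x : ℝ) : phi x = (Real.sqrt (2 * π))⁻¹ * Real.exp (-(1/2) * x ^ 2) := by
  unfold phi; congr 1; ring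

lemma phi_integrable : Integrable phi := by
  have h := (integrable_exp_neg_mul_sq (by norm_num : (0:ℝ) < 1/2)).const_mul (Real.sqrt (2*π))⁻¹
  exact h.congr (Filter.Eventually.of_forall fun x => (phi_eq x).symm)

lemma phi_total : ∫ x, phi x = 1 := by
  have h : ∫ x : ℝ, Real.exp (-(1/2) * x ^ 2) = Real.sqrt (π / (1/2)) := integral_gaussian (1/2)
  have h2 : ∫ x, phi x = (Real.sqrt (2*π))⁻¹ * ∫ x : ℝ, Real.exp (-(1/2) * x ^ 2) := by
    rw [← integral_const_mul]; exact integral_congr_ae (Filter.Eventually.of_forall fun x => phi_eq x)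
  rw [h2, h]
  have : π / (1/2) = 2 * π := by ring
  rw [this, inv_mul_cancel₀]
  positivity

lemma phi_nonneg (x : ℝ) : 0 ≤ phi x := by
  unfold phi; positivity

lemma phi_hasDeriv (x : ℝ) : HasDerivAt phi (-x * phi x) x := by
  have h1 : HasDerivAt (fun y : ℝ => -(1/2) * y^2) (-x) x := by
    have := (hasDerivAt_pow 2 x).const_mul (-(1/2) : ℝ)
    refine this.congr_deriv (Eq.symm ?_)
    simp
  have h2 := (h1.exp).const_mul (Real.sqrt (2*π))⁻¹
  have hfun : phi = fun y => (Real.sqrt (2*π))⁻¹ * Real.exp (-(1/2) * y^2) := funext phi_eq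
  rw [hfun]
  refine h2.congr_deriv (Eq.symm ?_)
  rw [← hfun, phi_eq]; ring

lemma phi_tendsto : Tendsto phi atTop (nhds 0) := by
  unfold phi
  rw [show (0:ℝ) = (Real.sqrt (2*π))⁻¹ * 0 by ring]
  apply Filter.Tendsto.const_mul
  apply Real.tendsto_exp_atBot.comp
  apply Filter.Tendsto.atBot_div_const (by norm_num : (0:ℝ) < 2)
  exact tendsto_neg_atBot_iff.mpr (tendsto_pow_atTop (by norm_num))

lemma phi_cont : Continuous phi := by
  unfold phi; continuity

lemma cdf_add_tail (s : ℝ) : (∫ x in Iic s, phi x) + ∫ x in Ioi s, phi x = 1 := by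
  rw [intervalIntegral.integral_Iic_add_Ioi phi_integrable.integrableOn phi_integrable.integrableOn, phi_total]

lemma phi_even (x : ℝ) : phi (-x) = phi x := by unfold phi; rw [neg_pow]; norm_num

lemma cdf_zero : ∫ x in Iic (0:ℝ), phi x = 1/2 := by
  have h1 : ∫ x in Iic (0:ℝ), phi x = ∫ x in Ioi (0:ℝ), phi x := by
    have h := integral_comp_neg_Iic (0:ℝ) phi
    simp_rw [phi_even] at h
    rw [h, neg_zero]
  have h2 := cdf_add_tail 0
  linarith

lemma tail_key (b : ℝ) (hb : 0 < b) :
    IntegrableOn (fun x => (x ^ 2)⁻¹ * phi x) (Ioi b) ∧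
      ∫ x in Ioi b, (x ^ 2)⁻¹ * phi x = b⁻¹ * phi b - ∫ x in Ioi b, phi x := by
  set g : ℝ → ℝ := fun x => -(x⁻¹ * phi x) with hg_def
  have hderiv : ∀ x ∈ Ioi b, HasDerivAt g ((x ^ 2)⁻¹ * phi x + phi x) x := by
    intro x hx
    have hx0 : (0:ℝ) < x := lt_trans hb hx
    have h := ((hasDerivAt_inv (ne_of_gt hx0)).mul (phi_hasDeriv x)).neg
    refine h.congr_deriv (Eq.symm ?_)
    field_simp
    ring
  have hcont : ContinuousWithinAt g (Ici b) b := by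
    apply ContinuousAt.continuousWithinAt
    exact (((continuousAt_inv₀ (ne_of_gt hb)).mul phi_cont.continuousAt).neg)
  have hlim : Tendsto g atTop (nhds 0) := by
    have := (tendsto_inv_atTop_zero.mul phi_tendsto).neg
    simpa using this
  have hnonneg : ∀ x ∈ Ioi b, 0 ≤ (x ^ 2)⁻¹ * phi x + phi x := fun x _ =>
    add_nonneg (mul_nonneg (inv_nonneg.mpr (sq_nonneg x)) (phi_nonneg x)) (phi_nonneg x)
  have hIsum := integrableOn_Ioi_deriv_of_nonneg hcont hderiv hnonneg hlim
  have hsum := integral_Ioi_of_hasDerivAt_of_nonneg hcont hderiv hnonneg hlim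
  have hIphi : IntegrableOn phi (Ioi b) := phi_integrable.integrableOn
  have hI : IntegrableOn (fun x => (x ^ 2)⁻¹ * phi x) (Ioi b) :=
    (hIsum.sub hIphi).congr (Filter.Eventually.of_forall fun x => by simp)
  refine ⟨hI, ?_⟩
  have h2 : ∫ x in Ioi b, ((x ^ 2)⁻¹ * phi x + phi x) =
      (∫ x in Ioi b, (x ^ 2)⁻¹ * phi x) + ∫ x in Ioi b, phi x := integral_add hI hIphi
  have h3 : (0:ℝ) - g b = b⁻¹ * phi b := by simp [hg_def]
  rw [hsum, h3] at h2
  linarith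

/-- If `τ` has the positive 1/2-stable density `f(t) = (2πt³)^{−1/2} e^{−1/(2t)}`
on `(0,∞)`, then for `a, u > 0`,
`E[min(u, aτ)] = u + √(2au/π) e^{−a/(2u)} − 2(a+u)(1 − Φ(√(a/u)))`. -/
theorem stmt_17
    {Ω : Type*} [MeasurableSpace Ω] (P : Measure Ω) [IsProbabilityMeasure P]
    (τ : Ω → ℝ) (hτmeas : Measurable τ)
    (hτdist : Measure.map τ P = volume.withDensity (fun t =>
        ENNReal.ofReal (Set.indicator (Set.Ioi (0:ℝ))
          (fun t => (2 * π * t ^ 3) ^ (-(1:ℝ)/2) * Real.exp (-1 / (2 * t))) t)))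
    (Φ : ℝ → ℝ)
    (hΦ : ∀ s, Φ s = ∫ x in Set.Iic s, (Real.sqrt (2 * π))⁻¹ * Real.exp (-x ^ 2 / 2))
    (a u : ℝ) (ha : 0 < a) (hu : 0 < u) :
    ∫ ω, min u (a * τ ω) ∂P
      = u + Real.sqrt (2 * a * u / π) * Real.exp (-a / (2 * u))
        - 2 * (a + u) * (1 - Φ (Real.sqrt (a / u))) := by
  set dens : ℝ → ℝ := fun t => (2 * π * t ^ 3) ^ (-(1:ℝ)/2) * Real.exp (-1 / (2 * t)) with hdens_def
  set ind : ℝ → ℝ := Set.indicator (Set.Ioi (0:ℝ)) dens with hind_def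
  have hdens_meas : Measurable dens := by fun_prop
  have hind_meas : Measurable ind := hdens_meas.indicator measurableSet_Ioi
  have hind_nonneg : ∀ t, 0 ≤ ind t := by
    intro t
    apply Set.indicator_nonneg
    intro s hs
    have : (0:ℝ) < 2 * π * s ^ 3 := by
      have := Real.pi_pos
      have : (0:ℝ) < s := hs
      positivity
    positivity
  have hg_cont : Continuous (fun t : ℝ => min u (a * t)) :=
    continuous_const.min (continuous_const.mul continuous_id)
  -- Step A: reduce to a Lebesgue integral on (0,∞)
  have stepA : ∫ ω, min u (a * τ ω) ∂P
      = ∫ t in Set.Ioi (0:ℝ), dens t * min u (a * t) := by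
    have h1 : ∫ ω, min u (a * τ ω) ∂P = ∫ t, min u (a * t) ∂(Measure.map τ P) :=
      (integral_map hτmeas.aemeasurable hg_cont.aestronglyMeasurable).symm
    rw [h1, hτdist]
    have h2 : ∫ t, min u (a * t) ∂(volume.withDensity (fun t => ENNReal.ofReal (ind t)))
        = ∫ t, ((ind t).toNNReal : ℝ) • min u (a * t) := by
      exact integral_withDensity_eq_integral_smul
        (measurable_real_toNNReal.comp hind_meas) _
    rw [h2]
    have h3 : ∀ t, ((ind t).toNNReal : ℝ) • min u (a * t) = ind t * min u (a * t) := by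
      intro t
      rw [smul_eq_mul, Real.coe_toNNReal _ (hind_nonneg t)]
    simp_rw [h3]
    rw [← integral_indicator measurableSet_Ioi]
    congr 1
    ext t
    exact (Set.indicator_mul_left _ dens (fun t => min u (a * t))).symm
  rw [stepA]
  have rpow_neg_half_eq : ∀ A : ℝ, 0 < A → A ^ (-(1:ℝ)/2) = (Real.sqrt A)⁻¹ := by
    intro A hA
    rw [Real.sqrt_eq_rpow, ← Real.rpow_neg hA.le]
    norm_num
  have stepB : ∫ t in Set.Ioi (0:ℝ), dens t * min u (a * t)
      = ∫ x in Set.Ioi (0:ℝ), 2 * phi x * min u (a * (x^2)⁻¹) := by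
    have himg : (fun x : ℝ => (x^2)⁻¹) '' Set.Ioi 0 = Set.Ioi 0 := by
      ext y
      constructor
      · rintro ⟨x, hx, rfl⟩
        exact inv_pos.mpr (pow_pos (Set.mem_Ioi.mp hx) 2)
      · intro hy
        refine ⟨(Real.sqrt y)⁻¹, Set.mem_Ioi.mpr (inv_pos.mpr (Real.sqrt_pos.mpr hy)), ?_⟩
        have h1 : ((Real.sqrt y)⁻¹)^2 = y⁻¹ := by
          rw [inv_pow, Real.sq_sqrt (le_of_lt hy)]
        simp only [h1, inv_inv]
    have hd : ∀ x ∈ Set.Ioi (0:ℝ), HasDerivWithinAt (fun x : ℝ => (x^2)⁻¹)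
        (-2 * (x^3)⁻¹) (Set.Ioi 0) x := by
      intro x hx
      have hx0 : (0:ℝ) < x := hx
      have h := (hasDerivAt_pow 2 x).inv (pow_ne_zero 2 (ne_of_gt hx0))
      have h2 : HasDerivAt (fun x : ℝ => (x^2)⁻¹) (-2 * (x^3)⁻¹) x := by
        refine h.congr_deriv (Eq.symm ?_)
        field_simp
        ring
      exact h2.hasDerivWithinAt
    have hinj : Set.InjOn (fun x : ℝ => (x^2)⁻¹) (Set.Ioi 0) := by
      have hanti : StrictAntiOn (fun x : ℝ => (x^2)⁻¹) (Set.Ioi 0) := by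
        intro x hx y hy hxy
        have hxx : (0:ℝ) < x := hx
        have h2 : x^2 < y^2 := by nlinarith
        exact inv_strictAnti₀ (pow_pos hxx 2) h2
      exact hanti.injOn
    have h := integral_image_eq_integral_abs_deriv_smul measurableSet_Ioi hd hinj
        (fun t => dens t * min u (a * t))
    rw [himg] at h
    rw [h]
    apply setIntegral_congr_fun measurableSet_Ioi
    intro x hx
    have hx0 : (0:ℝ) < x := hx
    have hx3 : (0:ℝ) < x^3 := pow_pos hx0 3
    have habs : |(-2 * (x^3)⁻¹)| = 2 * (x^3)⁻¹ := by
      rw [abs_of_nonpos (by nlinarith [inv_pos.mpr hx3])]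
      ring
    have hexp : -1 / (2 * ((x^2)⁻¹)) = -x^2/2 := by
      field_simp
    have hrpow : (2 * π * ((x^2)⁻¹) ^ 3) ^ (-(1:ℝ)/2) = (Real.sqrt (2*π))⁻¹ * x^3 := by
      have hA : 2 * π * ((x^2)⁻¹) ^ 3 = 2*π * ((x^3)^2)⁻¹ := by ring
      have hpi := Real.pi_pos
      have hApos : 0 < 2 * π * ((x^2)⁻¹) ^ 3 := by positivity
      rw [rpow_neg_half_eq _ hApos, hA, Real.sqrt_mul (by positivity) _, Real.sqrt_inv,
        Real.sqrt_sq hx3.le, mul_inv, inv_inv]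
    have hdens2 : dens ((x^2)⁻¹) = (Real.sqrt (2*π))⁻¹ * x^3 * Real.exp (-x^2/2) := by
      rw [hdens_def]
      simp only
      rw [hexp, hrpow]
    simp only [smul_eq_mul]
    rw [habs, hdens2]
    unfold phi
    field_simp
  rw [stepB]
  have hPhi : ∀ s : ℝ, (∫ x in Set.Iic s, phi x) = Φ s := fun s => by rw [hΦ s]; rfl
  set b := Real.sqrt (a/u) with hb_def
  have hb : 0 < b := Real.sqrt_pos.mpr (by positivity)
  have hb2 : b^2 = a/u := Real.sq_sqrt (by positivity)
  have hmin1 : ∀ x ∈ Set.Ioc (0:ℝ) b, 2 * phi x * min u (a * (x^2)⁻¹) = 2 * u * phi x := by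
    intro x hx
    have hx0 : 0 < x := hx.1
    have hx2 : x^2 ≤ a/u := by rw [← hb2]; exact pow_le_pow_left₀ hx0.le hx.2 2
    have h3 : u ≤ a / x^2 := (le_div_iff₀ (pow_pos hx0 2)).mpr (by
      have := (le_div_iff₀ hu).mp hx2
      linarith)
    rw [div_eq_mul_inv] at h3
    rw [min_eq_left h3]; ring
  have hmin2 : ∀ x ∈ Set.Ioi b, 2 * phi x * min u (a * (x^2)⁻¹)
      = 2 * a * ((x^2)⁻¹ * phi x) := by
    intro x hx
    have hbx : b < x := hx
    have hx0 : 0 < x := hb.trans hbx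
    have hx2 : 0 < x^2 := pow_pos hx0 2
    have h2 : a / u < x^2 := by rw [← hb2]; nlinarith
    have h3 : a * (x^2)⁻¹ ≤ u := by
      rw [← div_eq_mul_inv, div_le_iff₀ hx2]
      have := (div_lt_iff₀ hu).mp h2
      nlinarith
    rw [min_eq_right h3]; ring
  have hIu : IntegrableOn (fun x => 2 * phi x * min u (a * (x^2)⁻¹)) (Set.Ioc 0 b) := by
    apply MeasureTheory.IntegrableOn.congr_fun
      ((phi_integrable.const_mul (2*u)).integrableOn) ?_ measurableSet_Ioc
    exact fun x hx => (hmin1 x hx).symm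
  have hIa : IntegrableOn (fun x => 2 * phi x * min u (a * (x^2)⁻¹)) (Set.Ioi b) := by
    apply MeasureTheory.IntegrableOn.congr_fun
      (((tail_key b hb).1.const_mul (2*a)) ) ?_ measurableSet_Ioi
    exact fun x hx => (hmin2 x hx).symm
  have hsplit_set : Set.Ioc (0:ℝ) b ∪ Set.Ioi b = Set.Ioi 0 := Set.Ioc_union_Ioi_eq_Ioi hb.le
  rw [← hsplit_set, setIntegral_union (Set.Ioc_disjoint_Ioi le_rfl) measurableSet_Ioi hIu hIa]
  have hP1 : ∫ x in Set.Ioc (0:ℝ) b, 2 * phi x * min u (a * (x^2)⁻¹) = 2*u*(Φ b - 1/2) := by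
    rw [setIntegral_congr_fun measurableSet_Ioc hmin1]
    have h1 := intervalIntegral.integral_Iic_sub_Iic (phi_integrable.integrableOn (s := Set.Iic 0))
      (phi_integrable.integrableOn (s := Set.Iic b))
    rw [intervalIntegral.integral_of_le hb.le] at h1
    rw [integral_const_mul, ← h1, cdf_zero, hPhi b]
  have htail : ∫ x in Set.Ioi b, phi x = 1 - Φ b := by
    have h1 := cdf_add_tail b
    have h2 := hPhi b
    linarith
  have hP2 : ∫ x in Set.Ioi b, 2 * phi x * min u (a * (x^2)⁻¹)
      = 2*a*(b⁻¹ * phi b - (1 - Φ b)) := by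
    rw [setIntegral_congr_fun measurableSet_Ioi hmin2, integral_const_mul, (tail_key b hb).2,
      htail]
  rw [hP1, hP2]
  -- final algebra
  have hphib : phi b = (Real.sqrt (2*π))⁻¹ * Real.exp (-a/(2*u)) := by
    unfold phi
    rw [hb2]
    congr 1
    ring
  have hsqrt : Real.sqrt (2*a*u/π) = 2 * a * b⁻¹ * (Real.sqrt (2*π))⁻¹ := by
    have hpi := Real.pi_pos
    have h4 : Real.sqrt ((2*a)^2 * (a/u)⁻¹ * (2*π)⁻¹) = 2*a*b⁻¹*(Real.sqrt (2*π))⁻¹ := by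
      rw [Real.sqrt_mul (mul_nonneg (sq_nonneg (2*a)) (by positivity)) ((2*π)⁻¹),
        Real.sqrt_mul (sq_nonneg (2*a)) ((a/u)⁻¹),
        Real.sqrt_sq (by positivity), Real.sqrt_inv (a/u), Real.sqrt_inv (2*π), ← hb_def]
    rw [← h4]
    congr 1
    field_simp
  have hS : 2*a*(b⁻¹ * phi b) = Real.sqrt (2*a*u/π) * Real.exp (-a/(2*u)) := by
    rw [hphib, hsqrt]; ring
  linear_combination hS
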